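/- Let f₁, f₂, f₋₁, f₋₂ be four points in R³ spanning (together with the differences) a three-dimensional affine space, and let f_{ε₁,ε₂} be a point on the line f_{ε₁} f_{ε₂} for each sign pair (ε₁,ε₂) ∈ {±1}². Then the four points f_{1,2}, f_{1,-2}, f_{-1,-2}, f_{-1,2} lie in a common plane if and only if the product of the four ratios of directed lengths (|f₂f₁₂|/|f₁₂f₁|)·(|f₁f_{1,-2}|/|f_{1,-2}f₋₂|)·(|f₋₂f_{-1,-2}|/|f_{-1,-2}f₋₁|)·(|f₋₁f_{-1,2}|/|f_{-1,2}f₂|) equals 1. -/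

import Mathlib

/-- The `n = 3` case of the generalized Menelaus theorem: given four points
`f₂, f₁, f₋₂, f₋₁` in general position in `ℝ³` and points on the four lines of the
cycle `f₂ → f₁ → f₋₂ → f₋₁ → f₂`, the four new points are coplanar iff the product
of the four ratios of directed lengths equals `1`. -/
theorem menelaus_coplanarity (f₁ f₂ fm₁ fm₂ : Fin 3 → ℝ)
    (hgen : AffineIndependent ℝ ![f₂, f₁, fm₂, fm₁])
    (a b c d : ℝ)
    (ha0 : a ≠ 0) (ha1 : a ≠ 1) (hb0 : b ≠ 0) (hb1 : b ≠ 1)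
    (hc0 : c ≠ 0) (hc1 : c ≠ 1) (hd0 : d ≠ 0) (hd1 : d ≠ 1)
    (f₁₂ f₁m₂ fm₁m₂ fm₁₂ : Fin 3 → ℝ)
    (h12 : f₁₂ = (1 - a) • f₂ + a • f₁)          -- |f₂f₁₂| / |f₁₂f₁| = a/(1-a)
    (h1m2 : f₁m₂ = (1 - b) • f₁ + b • fm₂)       -- |f₁f₁,₋₂| / |f₁,₋₂f₋₂| = b/(1-b)
    (hm1m2 : fm₁m₂ = (1 - c) • fm₂ + c • fm₁)    -- |f₋₂f₋₁,₋₂| / |f₋₁,₋₂f₋₁| = c/(1-c)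
    (hm12 : fm₁₂ = (1 - d) • fm₁ + d • f₂) :     -- |f₋₁f₋₁,₂| / |f₋₁,₂f₂| = d/(1-d)
    (∃ s : AffineSubspace ℝ (Fin 3 → ℝ), Module.finrank ℝ s.direction ≤ 2 ∧
      f₁₂ ∈ s ∧ f₁m₂ ∈ s ∧ fm₁m₂ ∈ s ∧ fm₁₂ ∈ s) ↔
    (a / (1 - a)) * (b / (1 - b)) * (c / (1 - c)) * (d / (1 - d)) = 1 := by
  have h1a : (1 : ℝ) - a ≠ 0 := sub_ne_zero.2 (Ne.symm ha1)
  have h1b : (1 : ℝ) - b ≠ 0 := sub_ne_zero.2 (Ne.symm hb1)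
  have h1c : (1 : ℝ) - c ≠ 0 := sub_ne_zero.2 (Ne.symm hc1)
  have h1d : (1 : ℝ) - d ≠ 0 := sub_ne_zero.2 (Ne.symm hd1)
  have hdim : Module.finrank ℝ (Fin 3 → ℝ) = 3 := by simp
  set B : Fin 4 → (Fin 3 → ℝ) := ![f₂, f₁, fm₂, fm₁] with hB
  have htot : affineSpan ℝ (Set.range B) = ⊤ := by
    rw [hgen.affineSpan_eq_top_iff_card_eq_finrank_add_one, hdim]
    simp
  let bb : AffineBasis (Fin 4) ℝ (Fin 3 → ℝ) := ⟨B, hgen, htot⟩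
  set p : Fin 4 → (Fin 3 → ℝ) := ![f₁₂, f₁m₂, fm₁m₂, fm₁₂] with hpdef
  set W : Fin 4 → Fin 4 → ℝ :=
    ![![1 - a, a, 0, 0], ![0, 1 - b, b, 0], ![0, 0, 1 - c, c], ![d, 0, 0, 1 - d]] with hW
  have hWsum : ∀ i, ∑ j, W i j = 1 := by
    intro i
    fin_cases i <;> simp [hW, Fin.sum_univ_four] <;> ring
  have hp : ∀ i, p i = Finset.univ.affineCombination ℝ B (W i) := by
    intro i
    rw [Finset.univ.affineCombination_eq_linear_combination _ _ (hWsum i)]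
    fin_cases i <;>
      simp [hpdef, hW, hB, Fin.sum_univ_four, h12, h1m2, hm1m2, hm12] <;> abel
  have hmat : bb.toMatrix p = Matrix.of W := by
    ext i j
    rw [AffineBasis.toMatrix_apply, hp i]
    exact bb.coord_apply_combination_of_mem (Finset.mem_univ j) (hWsum i)
  have hdet : (bb.toMatrix p).det
      = (1 - a) * (1 - b) * (1 - c) * (1 - d) - a * b * c * d := by
    rw [hmat]
    simp [hW, Matrix.det_succ_row_zero, Fin.sum_univ_succ, Fin.succAbove]
    ring
  have key : AffineIndependent ℝ p ↔ (bb.toMatrix p).det ≠ 0 := by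
    constructor
    · intro h
      have htot' : affineSpan ℝ (Set.range p) = ⊤ := by
        rw [h.affineSpan_eq_top_iff_card_eq_finrank_add_one, hdim]
        simp
      have := (bb.isUnit_toMatrix_iff p).2 ⟨h, htot'⟩
      exact isUnit_iff_ne_zero.1 ((Matrix.isUnit_iff_isUnit_det _).1 this)
    · intro h
      exact ((bb.isUnit_toMatrix_iff p).1
        ((Matrix.isUnit_iff_isUnit_det _).2 (isUnit_iff_ne_zero.2 h))).1
  have hL : (∃ s : AffineSubspace ℝ (Fin 3 → ℝ), Module.finrank ℝ s.direction ≤ 2 ∧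
      f₁₂ ∈ s ∧ f₁m₂ ∈ s ∧ fm₁m₂ ∈ s ∧ fm₁₂ ∈ s) ↔
      Module.finrank ℝ (vectorSpan ℝ (Set.range p)) ≤ 2 := by
    constructor
    · rintro ⟨s, hs, h1, h2, h3, h4⟩
      have hsub : Set.range p ⊆ s := by
        rintro x ⟨i, rfl⟩
        fin_cases i <;> simpa [hpdef]
      have hle : vectorSpan ℝ (Set.range p) ≤ s.direction := by
        rw [← direction_affineSpan]
        exact AffineSubspace.direction_le ((affineSpan_le).2 hsub)
      exact le_trans (Submodule.finrank_mono hle) hs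
    · intro h
      refine ⟨affineSpan ℝ (Set.range p), ?_, ?_, ?_, ?_, ?_⟩
      · rwa [direction_affineSpan]
      · exact subset_affineSpan ℝ _ ⟨0, by simp [hpdef]⟩
      · exact subset_affineSpan ℝ _ ⟨1, by simp [hpdef]⟩
      · exact subset_affineSpan ℝ _ ⟨2, by simp [hpdef]⟩
      · exact subset_affineSpan ℝ _ ⟨3, by simp [hpdef]⟩
  rw [hL, finrank_vectorSpan_le_iff_not_affineIndependent ℝ p (by simp), key, hdet,
    not_ne_iff, sub_eq_zero, div_mul_div_comm, div_mul_div_comm, div_mul_div_comm,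
    div_eq_one_iff_eq (by exact mul_ne_zero (mul_ne_zero (mul_ne_zero h1a h1b) h1c) h1d),
    eq_comm]
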